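/- arXiv:2510.11439 — 4 statements merged into one kernel-verified Lean document; each statement's English description precedes it below -/
import Mathlib

section
/- Let d ≥ 1 and N ∈ ℕ. There exist a Schwartz function η ∈ S(ℝ^d) and a constant c > 0 such that 0 ≤ η(x) ≤ 1 for all x ∈ ℝ^d, η(x) = 1 whenever |x| ≤ 1, η(x) = 0 whenever |x| ≥ 2, and (Δ^{2N} η)(y) ≥ c for all y ∈ ℝ^d with 5/4 ≤ |y| ≤ 7/4, where Δ^{2N} denotes the 2N-fold iterated Laplace operator on ℝ^d. -/
open MeasureTheory

/-- The Laplace operator on functions on `EuclideanSpace ℝ (Fin d)`: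
`(Δ f)(x) = ∑ i, ∂²f/∂x_i² (x)`. -/
noncomputable def lap (d : ℕ) (f : EuclideanSpace ℝ (Fin d) → ℝ) :
    EuclideanSpace ℝ (Fin d) → ℝ :=
  fun x => ∑ i : Fin d,
    iteratedFDeriv ℝ 2 f x ![EuclideanSpace.single i 1, EuclideanSpace.single i 1]

open scoped ContDiff
open Set Metric Filter

section Aux

variable {d : ℕ}

private theorem lap_cos (hd : 0 < d) (a b : ℝ) :
    lap d (fun x => b + a * Real.cos ((2⁻¹ : ℝ) * x ⟨0, hd⟩)) =
      fun x => (0:ℝ) + (-(4⁻¹:ℝ) * a) * Real.cos ((2⁻¹ : ℝ) * x ⟨0, hd⟩) := by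
  set i₀ : Fin d := ⟨0, hd⟩
  set L : EuclideanSpace ℝ (Fin d) →L[ℝ] ℝ := (2⁻¹ : ℝ) • EuclideanSpace.proj i₀ with hL
  set g : ℝ → ℝ := fun t => b + a * Real.cos t with hg
  have hLx : ∀ x : EuclideanSpace ℝ (Fin d), L x = 2⁻¹ * x i₀ := by
    intro x; simp [hL]
  have hcomp : (fun x : EuclideanSpace ℝ (Fin d) => b + a * Real.cos ((2⁻¹:ℝ) * x i₀)) = g ∘ L := by
    funext x; simp [hg, hLx]
  have hgsm : ContDiff ℝ ∞ g := contDiff_const.add (contDiff_const.mul Real.contDiff_cos)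
  have hderiv : iteratedDeriv 2 g = fun t => -(a * Real.cos t) := by
    have h1 : deriv g = fun t => -(a * Real.sin t) := by
      funext t
      simp [hg, deriv_const_mul_field, Real.deriv_cos]
    rw [show (2:ℕ) = 1 + 1 from rfl, iteratedDeriv_succ, iteratedDeriv_one, h1]
    funext t
    simp [deriv_const_mul_field, Real.deriv_sin]
  funext x
  rw [hcomp]
  unfold lap
  have key : ∀ i : Fin d,
      iteratedFDeriv ℝ 2 (g ∘ L) x ![EuclideanSpace.single i 1, EuclideanSpace.single i 1]
        = (L (EuclideanSpace.single i 1)) * (L (EuclideanSpace.single i 1))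
            * (-(a * Real.cos (L x))) := by
    intro i
    rw [L.iteratedFDeriv_comp_right hgsm x (by norm_cast)]
    rw [ContinuousMultilinearMap.compContinuousLinearMap_apply]
    rw [iteratedFDeriv_apply_eq_iteratedDeriv_mul_prod, hderiv]
    simp [Fin.prod_univ_two]
  simp only [key]
  have hLe : ∀ i : Fin d, L (EuclideanSpace.single i 1) = if i = i₀ then 2⁻¹ else 0 := by
    intro i
    rw [hLx, EuclideanSpace.single_apply]
    rcases eq_or_ne i i₀ with h | h
    · subst h; simp
    · simp [h, Ne.symm h]
  simp only [hLe]
  have hsummand : ∀ i : Fin d,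
      ((if i = i₀ then (2⁻¹:ℝ) else 0) * if i = i₀ then (2⁻¹:ℝ) else 0) * -(a * Real.cos (L x))
        = if i = i₀ then (4⁻¹:ℝ) * -(a * Real.cos (L x)) else 0 := by
    intro i; split <;> norm_num
  rw [Finset.sum_congr rfl (fun i _ => hsummand i), Finset.sum_ite_eq' Finset.univ i₀]
  simp [hLx]
  ring

private theorem lap_iter_cos (hd : 0 < d) (a b : ℝ) (k : ℕ) :
    (lap d)^[k] (fun x => b + a * Real.cos ((2⁻¹ : ℝ) * x ⟨0, hd⟩)) =
      fun x => (if k = 0 then b else 0)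
        + ((-(4⁻¹:ℝ))^k * a) * Real.cos ((2⁻¹ : ℝ) * x ⟨0, hd⟩) := by
  induction k with
  | zero => simp
  | succ k ih =>
    rw [Function.iterate_succ_apply', ih, lap_cos hd]
    funext x
    rw [if_neg (Nat.succ_ne_zero k)]
    ring

private theorem lap_iter_eqOn {U : Set (EuclideanSpace ℝ (Fin d))} (hU : IsOpen U)
    {f g : EuclideanSpace ℝ (Fin d) → ℝ} (h : Set.EqOn f g U) (k : ℕ) :
    Set.EqOn ((lap d)^[k] f) ((lap d)^[k] g) U := by
  induction k with
  | zero => exact h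
  | succ k ih =>
    rw [Function.iterate_succ_apply', Function.iterate_succ_apply']
    intro x hx
    have hev : (lap d)^[k] f =ᶠ[nhds x] (lap d)^[k] g := by
      filter_upwards [hU.mem_nhds hx] with z hz using ih hz
    have hiter : iteratedFDeriv ℝ 2 ((lap d)^[k] f) x = iteratedFDeriv ℝ 2 ((lap d)^[k] g) x := by
      have h' : (lap d)^[k] f =ᶠ[nhdsWithin x Set.univ] (lap d)^[k] g :=
        hev.filter_mono nhdsWithin_le_nhds
      have h2 := Filter.EventuallyEq.iteratedFDerivWithin_eq (𝕜 := ℝ) h' (hev.self_of_nhds) 2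
      rw [iteratedFDerivWithin_univ, iteratedFDerivWithin_univ] at h2
      exact h2
    have hgen : ∀ F G : EuclideanSpace ℝ (Fin d) → ℝ,
        iteratedFDeriv ℝ 2 F x = iteratedFDeriv ℝ 2 G x → lap d F x = lap d G x := by
      intro F G hFG
      simp only [lap, hFG]
    exact hgen ((lap d)^[k] f) ((lap d)^[k] g) hiter

private theorem exists_schwartz {f : EuclideanSpace ℝ (Fin d) → ℝ} (hf : ContDiff ℝ ∞ f)
    (h : HasCompactSupport f) : ∃ g : SchwartzMap (EuclideanSpace ℝ (Fin d)) ℝ, ⇑g = f := by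
  refine ⟨⟨f, hf, ?_⟩, rfl⟩
  intro k n
  have h1 : HasCompactSupport
      ((fun x : EuclideanSpace ℝ (Fin d) => ‖x‖ ^ k) • iteratedFDeriv ℝ n f) :=
    HasCompactSupport.smul_left (h.iteratedFDeriv n)
  have hcont1 : Continuous fun x : EuclideanSpace ℝ (Fin d) => iteratedFDeriv ℝ n f x :=
    ContDiff.continuous_iteratedFDeriv (mod_cast le_top) hf
  have hcont : Continuous
      ((fun x : EuclideanSpace ℝ (Fin d) => ‖x‖ ^ k) • iteratedFDeriv ℝ n f) :=
    (continuous_norm.pow k).smul hcont1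
  obtain ⟨C, hC⟩ := h1.exists_bound_of_continuous hcont
  refine ⟨C, fun x => ?_⟩
  have h2 := hC x
  rw [Pi.smul_apply', norm_smul, norm_pow, norm_norm] at h2
  exact h2

private theorem coord_abs_le_norm (y : EuclideanSpace ℝ (Fin d)) (i : Fin d) : |y i| ≤ ‖y‖ := by
  have h1 : |y i| = Real.sqrt ((y i) ^ 2) := (Real.sqrt_sq_eq_abs _).symm
  rw [h1, EuclideanSpace.norm_eq]
  apply Real.sqrt_le_sqrt
  have h2 := Finset.single_le_sum (f := fun j => ‖y j‖ ^ 2)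
    (fun j _ => sq_nonneg _) (Finset.mem_univ i)
  simpa [Real.norm_eq_abs, sq_abs] using h2

end Aux

theorem statement12 (d : ℕ) (hd : 1 ≤ d) (N : ℕ) :
    ∃ (η : SchwartzMap (EuclideanSpace ℝ (Fin d)) ℝ) (c : ℝ), 0 < c ∧
      (∀ x, 0 ≤ η x ∧ η x ≤ 1) ∧
      (∀ x, ‖x‖ ≤ 1 → η x = 1) ∧
      (∀ x, 2 ≤ ‖x‖ → η x = 0) ∧
      (∀ y : EuclideanSpace ℝ (Fin d),
        5 / 4 ≤ ‖y‖ → ‖y‖ ≤ 7 / 4 → c ≤ (lap d)^[2 * N] (⇑η) y) := by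
  have hd0 : 0 < d := hd
  set i₀ : Fin d := ⟨0, hd0⟩ with hi₀
  -- bump functions
  set φ : ContDiffBump (0 : EuclideanSpace ℝ (Fin d)) := ⟨1, 9/8, by norm_num, by norm_num⟩
  set ψ : ContDiffBump (0 : EuclideanSpace ℝ (Fin d)) := ⟨15/8, 2, by norm_num, by norm_num⟩
  -- the oscillating part
  set w : EuclideanSpace ℝ (Fin d) → ℝ := fun x => Real.cos ((2⁻¹ : ℝ) * x i₀) with hw
  set t : EuclideanSpace ℝ (Fin d) → ℝ := fun x => 2⁻¹ + 4⁻¹ * w x with ht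
  set η₀ : EuclideanSpace ℝ (Fin d) → ℝ := fun x => φ x + (ψ x - φ x) * t x with hη₀
  have hwb : ∀ x, |w x| ≤ 1 := fun x => Real.abs_cos_le_one _
  have htb : ∀ x, (4⁻¹ : ℝ) ≤ t x ∧ t x ≤ 3/4 := by
    intro x
    have := abs_le.1 (hwb x)
    constructor <;> simp only [ht] <;> nlinarith [this.1, this.2]
  have hφψ : ∀ x, φ x ≤ ψ x := by
    intro x
    rcases le_or_gt ‖x‖ (15/8) with h | h
    · have : ψ x = 1 := ψ.one_of_mem_closedBall (by simpa [dist_zero_right] using h)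
      rw [this]; exact φ.le_one
    · have : φ x = 0 := φ.zero_of_le_dist (by simp [dist_zero_right]; show (9/8:ℝ) ≤ ‖x‖; linarith)
      rw [this]; exact ψ.nonneg
  -- smoothness and compact support of η₀
  have hwsm : ContDiff ℝ ∞ w := by
    have : w = Real.cos ∘ (fun x : EuclideanSpace ℝ (Fin d) => (2⁻¹:ℝ) * x i₀) := rfl
    rw [this]
    exact Real.contDiff_cos.comp (contDiff_const.mul (by exact (EuclideanSpace.proj (𝕜 := ℝ) i₀).contDiff))
  have hη₀sm : ContDiff ℝ ∞ η₀ :=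
    φ.contDiff.add (((ψ.contDiff.sub φ.contDiff)).mul
      (contDiff_const.add (contDiff_const.mul hwsm)))
  have hη₀supp : HasCompactSupport η₀ := by
    apply HasCompactSupport.intro (isCompact_closedBall (0 : EuclideanSpace ℝ (Fin d)) 2)
    intro x hx
    have hx2 : (2:ℝ) ≤ ‖x‖ := by
      by_contra hc
      exact hx (by simpa [dist_zero_right] using (not_le.mp hc).le)
    have hφ0 : φ x = 0 := φ.zero_of_le_dist (by simp [dist_zero_right]; show (9/8:ℝ) ≤ ‖x‖; linarith)
    have hψ0 : ψ x = 0 := ψ.zero_of_le_dist (by simp [dist_zero_right]; show (2:ℝ) ≤ ‖x‖; linarith)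
    simp [hη₀, hφ0, hψ0]
  obtain ⟨η, hηeq⟩ := exists_schwartz hη₀sm hη₀supp
  -- the open annulus where η₀ = t
  set U : Set (EuclideanSpace ℝ (Fin d)) := {x | 9/8 < ‖x‖ ∧ ‖x‖ < 15/8} with hU
  have hUopen : IsOpen U := by
    have : U = (fun x : EuclideanSpace ℝ (Fin d) => ‖x‖) ⁻¹' (Set.Ioo (9/8) (15/8)) := rfl
    rw [this]
    exact isOpen_Ioo.preimage continuous_norm
  have hUeq : Set.EqOn (⇑η) (fun x => (2⁻¹:ℝ) + 4⁻¹ * Real.cos ((2⁻¹:ℝ) * x ⟨0, hd0⟩)) U := by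
    intro x hx
    have hφ0 : φ x = 0 := φ.zero_of_le_dist (by simp [dist_zero_right]; exact hx.1.le)
    have hψ1 : ψ x = 1 := ψ.one_of_mem_closedBall (by simpa [dist_zero_right] using hx.2.le)
    rw [hηeq]
    simp [hη₀, hφ0, hψ1, ht, hw, hi₀]
  refine ⟨η, (16⁻¹:ℝ)^N * 4⁻¹ * Real.cos 1, ?_, ?_, ?_, ?_, ?_⟩
  · have := Real.cos_one_pos
    positivity
  · -- 0 ≤ η ≤ 1
    intro x
    rw [hηeq]
    have h1 := htb x
    have h2 := hφψ x
    have h3 := φ.nonneg (x := x)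
    have h4 := ψ.le_one (x := x)
    have h5 : 0 ≤ ψ x - φ x := sub_nonneg.mpr h2
    have h6 : (0:ℝ) ≤ t x := le_trans (by norm_num) h1.1
    have h7 : t x ≤ 1 := le_trans h1.2 (by norm_num)
    have hval : η₀ x = φ x + (ψ x - φ x) * t x := rfl
    rw [hval]
    constructor
    · nlinarith [mul_nonneg h5 h6]
    · nlinarith [mul_nonneg h5 (sub_nonneg.mpr h7)]
  · -- η = 1 on ball 1
    intro x hx
    rw [hηeq]
    have hφ1 : φ x = 1 := φ.one_of_mem_closedBall (by simpa [dist_zero_right] using hx)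
    have hψ1 : ψ x = 1 := ψ.one_of_mem_closedBall (by simp [dist_zero_right]; show ‖x‖ ≤ (15/8:ℝ); linarith)
    simp [hη₀, hφ1, hψ1]
  · -- η = 0 outside ball 2
    intro x hx
    rw [hηeq]
    have hφ0 : φ x = 0 := φ.zero_of_le_dist (by simp [dist_zero_right]; show (9/8:ℝ) ≤ ‖x‖; linarith)
    have hψ0 : ψ x = 0 := ψ.zero_of_le_dist (by simpa [dist_zero_right] using hx)
    simp [hη₀, hφ0, hψ0]
  · -- the lower bound for the iterated Laplacian
    intro y hy1 hy2
    have hyU : y ∈ U := ⟨by linarith, by linarith⟩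
    have hcongr := lap_iter_eqOn hUopen hUeq (2 * N) hyU
    rw [hcongr, lap_iter_cos hd0 (4⁻¹ : ℝ) (2⁻¹ : ℝ) (2 * N)]
    have hcos : Real.cos 1 ≤ Real.cos ((2⁻¹:ℝ) * y ⟨0, hd0⟩) := by
      have habs : |(2⁻¹:ℝ) * y ⟨0, hd0⟩| ≤ 1 := by
        rw [abs_mul]
        have := coord_abs_le_norm y ⟨0, hd0⟩
        rw [abs_of_pos (by norm_num : (0:ℝ) < 2⁻¹)]
        nlinarith
      rw [← Real.cos_abs ((2⁻¹:ℝ) * y ⟨0, hd0⟩)]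
      apply Real.cos_le_cos_of_nonneg_of_le_pi (abs_nonneg _) ?_ habs
      linarith [Real.pi_gt_three]
    have hpow : (-(4⁻¹:ℝ))^(2*N) = (16⁻¹:ℝ)^N := by
      rw [pow_mul]
      norm_num
    rw [hpow]
    have hif : (0:ℝ) ≤ (if 2 * N = 0 then (2⁻¹:ℝ) else 0) := by
      split <;> norm_num
    have hc1 : (0:ℝ) < Real.cos 1 := Real.cos_one_pos
    have h16 : (0:ℝ) < (16⁻¹:ℝ)^N := by positivity
    nlinarith [mul_le_mul_of_nonneg_left hcos (le_of_lt (by positivity : (0:ℝ) < (16⁻¹:ℝ)^N * 4⁻¹))]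
end

section
/- Let d ≥ 1 and for ℓ ∈ ℕ₀ set B_ℓ := B(3·2^{ℓ−1} e₁, 2^{ℓ−3}) ⊆ ℝ^d, where e₁ is the first standard unit vector. Then: (a) the balls (B_ℓ)_{ℓ∈ℕ₀} are pairwise disjoint; (b) for every j ∈ ℕ one has B_ℓ ⊆ B(0, 2^j) for all 0 ≤ ℓ ≤ j−1; (c) for all 0 < p ≤ u < ∞, every j ∈ ℕ and all nonnegative real numbers a_0, …, a_{j−1}, one has ‖Σ_{ℓ=0}^{j−1} a_ℓ · 1_{B_ℓ} ∣ M^u_p‖ ≥ |B(0,2^j)|^{1/u − 1/p} · (Σ_{ℓ=0}^{j−1} a_ℓ^p · |B_ℓ|)^{1/p}, where 1_{B_ℓ} denotes the indicator function of B_ℓ. -/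
open MeasureTheory Metric ENNReal

noncomputable def morreyNorm (d : ℕ) (p u : ℝ)
    (f : EuclideanSpace ℝ (Fin d) → ℝ≥0∞) : ℝ≥0∞ :=
  ⨆ (y : EuclideanSpace ℝ (Fin d)) (R : ℝ) (_ : 0 < R),
    volume (ball y R) ^ (1 / u - 1 / p) * (∫⁻ x in ball y R, f x ^ p) ^ (1 / p)

noncomputable def morreyNormC (d : ℕ) (p u : ℝ)
    (f : EuclideanSpace ℝ (Fin d) → ℂ) : ℝ≥0∞ :=
  morreyNorm d p u fun x => (‖f x‖₊ : ℝ≥0∞)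

lemma rpow_nat_aux (ℓ : ℕ) : (2:ℝ) ^ ((ℓ:ℝ) - 1) = 2 ^ ℓ / 2 ∧
    (2:ℝ) ^ ((ℓ:ℝ) - 3) = 2 ^ ℓ / 8 := by
  have h1 : (2:ℝ) ^ (1:ℝ) = 2 := Real.rpow_one 2
  have h3 : (2:ℝ) ^ (3:ℝ) = 8 := by
    rw [show (3:ℝ) = ((3:ℕ):ℝ) by norm_num, Real.rpow_natCast]; norm_num
  constructor
  · rw [Real.rpow_sub two_pos, h1, Real.rpow_natCast]
  · rw [Real.rpow_sub two_pos, h3, Real.rpow_natCast]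

theorem statement13 (d : ℕ) (hd : 0 < d) :
    ∀ e₁ : EuclideanSpace ℝ (Fin d), e₁ = EuclideanSpace.single (⟨0, hd⟩ : Fin d) (1 : ℝ) →
    ∀ B : ℕ → Set (EuclideanSpace ℝ (Fin d)),
      B = (fun ℓ : ℕ => ball ((3 * (2 : ℝ) ^ ((ℓ : ℝ) - 1)) • e₁) ((2 : ℝ) ^ ((ℓ : ℝ) - 3))) →
      -- (a) the balls are pairwise disjoint
      (Pairwise (Function.onFun Disjoint B)) ∧
      -- (b) for every j ≥ 1 they are contained in B(0, 2^j) for 0 ≤ ℓ ≤ j - 1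
      (∀ j : ℕ, 1 ≤ j → ∀ ℓ : ℕ, ℓ < j →
        B ℓ ⊆ ball (0 : EuclideanSpace ℝ (Fin d)) ((2 : ℝ) ^ j)) ∧
      -- (c) the lower Morrey-norm bound
      (∀ p u : ℝ, 0 < p → p ≤ u → ∀ j : ℕ, 1 ≤ j → ∀ a : ℕ → ℝ, (∀ ℓ, 0 ≤ a ℓ) →
        volume (ball (0 : EuclideanSpace ℝ (Fin d)) ((2 : ℝ) ^ j)) ^ (1 / u - 1 / p) *
            (∑ ℓ ∈ Finset.range j, ENNReal.ofReal (a ℓ ^ p) * volume (B ℓ)) ^ (1 / p) ≤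
          morreyNormC d p u
            (fun x => ((∑ ℓ ∈ Finset.range j,
              a ℓ * Set.indicator (B ℓ) (fun _ => (1 : ℝ)) x : ℝ) : ℂ))) := by
  intro e₁ he B hB
  have he1 : ‖e₁‖ = 1 := by rw [he, EuclideanSpace.norm_single]; norm_num
  have hdist : ∀ c c' : ℝ, dist (c • e₁) (c' • e₁) = |c - c'| := by
    intro c c'
    rw [dist_eq_norm, ← sub_smul, norm_smul, Real.norm_eq_abs, he1, mul_one]
  have hdist0 : ∀ c : ℝ, dist (c • e₁) (0 : EuclideanSpace ℝ (Fin d)) = |c| := by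
    intro c
    rw [dist_eq_norm, sub_zero, norm_smul, Real.norm_eq_abs, he1, mul_one]
  have key : ∀ ℓ m : ℕ, ℓ < m → Disjoint (B ℓ) (B m) := by
    intro ℓ m hlm
    rw [hB]
    apply ball_disjoint_ball
    rw [hdist]
    obtain ⟨hl1, hl3⟩ := rpow_nat_aux ℓ
    obtain ⟨hm1, hm3⟩ := rpow_nat_aux m
    rw [hl1, hl3, hm1, hm3]
    have hx : (0:ℝ) < 2 ^ ℓ := by positivity
    have h2 : (2:ℝ) * 2 ^ ℓ ≤ 2 ^ m := by
      rw [show (2:ℝ) * 2 ^ ℓ = 2 ^ (ℓ + 1) by ring]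
      exact pow_le_pow_right₀ one_le_two hlm
    rw [abs_sub_comm, abs_of_nonneg (by linarith)]
    linarith
  have ha : Pairwise (Function.onFun Disjoint B) := by
    intro ℓ m hne
    rcases hne.lt_or_gt with h | h
    · exact key _ _ h
    · exact (key _ _ h).symm
  have hb : ∀ j : ℕ, 1 ≤ j → ∀ ℓ : ℕ, ℓ < j →
      B ℓ ⊆ ball (0 : EuclideanSpace ℝ (Fin d)) ((2 : ℝ) ^ j) := by
    intro j hj ℓ hℓ
    rw [hB]
    apply ball_subset_ball'
    rw [hdist0]
    obtain ⟨hl1, hl3⟩ := rpow_nat_aux ℓ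
    rw [hl1, hl3]
    have hx : (0:ℝ) < 2 ^ ℓ := by positivity
    have h2 : (2:ℝ) * 2 ^ ℓ ≤ 2 ^ j := by
      rw [show (2:ℝ) * 2 ^ ℓ = 2 ^ (ℓ + 1) by ring]
      exact pow_le_pow_right₀ one_le_two hℓ
    rw [abs_of_nonneg (by positivity)]
    linarith
  refine ⟨ha, hb, ?_⟩
  intro p u hp hpu j hj a hapos
  unfold morreyNormC morreyNorm
  have hRpos : (0:ℝ) < 2 ^ j := by positivity
  refine le_iSup_of_le (0 : EuclideanSpace ℝ (Fin d)) (le_iSup_of_le ((2:ℝ) ^ j)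
    (le_iSup_of_le hRpos ?_))
  have hmeas : ∀ ℓ ∈ Finset.range j, MeasurableSet (B ℓ) := by
    intro ℓ _; rw [hB]; exact measurableSet_ball
  have hpd : (↑(Finset.range j) : Set ℕ).PairwiseDisjoint B :=
    fun i _ k _ hik => ha hik
  have hval : ∀ ℓ ∈ Finset.range j, ∀ x ∈ B ℓ,
      (∑ m ∈ Finset.range j, a m * Set.indicator (B m) (fun _ => (1:ℝ)) x) = a ℓ := by
    intro ℓ hℓ x hx
    rw [Finset.sum_eq_single_of_mem ℓ hℓ]
    · rw [Set.indicator_of_mem hx, mul_one]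
    · intro m hm hne
      rw [Set.indicator_of_notMem, mul_zero]
      intro hxm
      rcases hne.lt_or_gt with h | h
      · exact Set.disjoint_left.mp (key _ _ h) hxm hx
      · exact Set.disjoint_left.mp (key _ _ h) hx hxm
  have hint : ∀ ℓ ∈ Finset.range j,
      ∫⁻ x in B ℓ, ((‖((∑ m ∈ Finset.range j,
          a m * Set.indicator (B m) (fun _ => (1:ℝ)) x : ℝ) : ℂ)‖₊ : ℝ≥0∞)) ^ p
        = ENNReal.ofReal (a ℓ ^ p) * volume (B ℓ) := by
    intro ℓ hℓ
    rw [setLIntegral_congr_fun (hmeas ℓ hℓ)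
      (fun x hx => ?_), setLIntegral_const]
    rw [hval ℓ hℓ x hx]
    rw [← enorm_eq_nnnorm, ← ofReal_norm ((a ℓ : ℝ) : ℂ), Complex.norm_real, Real.norm_of_nonneg (hapos ℓ),
      ENNReal.ofReal_rpow_of_nonneg (hapos ℓ) hp.le]
  have hsum : (∑ ℓ ∈ Finset.range j, ENNReal.ofReal (a ℓ ^ p) * volume (B ℓ))
      ≤ ∫⁻ x in ball (0 : EuclideanSpace ℝ (Fin d)) ((2:ℝ) ^ j),
          ((‖((∑ m ∈ Finset.range j,
            a m * Set.indicator (B m) (fun _ => (1:ℝ)) x : ℝ) : ℂ)‖₊ : ℝ≥0∞)) ^ p := by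
    rw [← Finset.sum_congr rfl hint, ← lintegral_biUnion_finset hpd hmeas]
    apply lintegral_mono_set
    exact Set.iUnion₂_subset fun ℓ hℓ => hb j hj ℓ (Finset.mem_range.mp hℓ)
  gcongr
end

section
/- Let d ≥ 1, 0 < p ≤ u < ∞, 0 < q < ∞, s ∈ ℝ and c > 0. Let K ∈ S(ℝ^d) be a real-valued Schwartz function with K(y) ≥ c for all y with 5/4 ≤ |y| ≤ 7/4, and let ζ : ℝ^d → [0, ∞) be smooth with support contained in B(0, 1/8) and ∫_{ℝ^d} ζ(z) dz = 1. For k ∈ ℕ set K_k(x) := 2^{kd} K(2^k x), and for j ∈ ℕ set ζ_j(x) := ζ(2^j x). Then there exists a constant C > 0, independent of j, such that for every j ∈ ℕ: ‖ ( Σ_{k=1}^{j} 2^{ksq} |(K_k ∗ ζ_j)(·)|^q )^{1/q} ∣ M^u_p ‖ ≥ C · 2^{j(s − d/p)} · ( Σ_{ℓ=0}^{j−1} 2^{ℓ p (d(1/p − 1) − s)} )^{1/p}. -/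
set_option maxHeartbeats 1000000

open MeasureTheory Metric ENNReal

theorem statement15 (d : ℕ) (hd : 1 ≤ d) (p u q s : ℝ) (hp : 0 < p) (hpu : p ≤ u)
    (hq : 0 < q) (c : ℝ) (hc : 0 < c)
    (K : SchwartzMap (EuclideanSpace ℝ (Fin d)) ℝ)
    (hK : ∀ y : EuclideanSpace ℝ (Fin d), 5 / 4 ≤ ‖y‖ → ‖y‖ ≤ 7 / 4 → c ≤ K y)
    (ζ : EuclideanSpace ℝ (Fin d) → ℝ) (hζ_smooth : ContDiff ℝ (⊤ : ℕ∞) ζ)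
    (hζ_nonneg : ∀ z, 0 ≤ ζ z)
    (hζ_supp : tsupport ζ ⊆ ball (0 : EuclideanSpace ℝ (Fin d)) (1 / 8))
    (hζ_one : ∫ z, ζ z = 1) :
    ∃ C : ℝ, 0 < C ∧ ∀ j : ℕ, 1 ≤ j →
      ENNReal.ofReal (C * (2 : ℝ) ^ ((j : ℝ) * (s - d / p)) *
          (∑ ℓ ∈ Finset.range j,
            (2 : ℝ) ^ ((ℓ : ℝ) * p * (d * (1 / p - 1) - s))) ^ (1 / p)) ≤
        morreyNorm d p u (fun x =>
          (∑ k ∈ Finset.Icc 1 j, ENNReal.ofReal ((2 : ℝ) ^ ((k : ℝ) * s * q) *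
              |∫ y, (2 : ℝ) ^ (k * d) * K ((2 : ℝ) ^ k • (x - y)) *
                ζ ((2 : ℝ) ^ j • y)| ^ q)) ^ (1 / q)) := by
  have hωpos : (0:ℝ≥0∞) < volume (ball (0 : EuclideanSpace ℝ (Fin d)) 1) :=
    measure_ball_pos _ _ one_pos
  have hωtop : volume (ball (0 : EuclideanSpace ℝ (Fin d)) 1) ≠ ⊤ := measure_ball_lt_top.ne
  have hVpos : (0:ℝ≥0∞) < volume (ball (0 : EuclideanSpace ℝ (Fin d)) 2) :=
    measure_ball_pos _ _ two_pos
  have hVtop : volume (ball (0 : EuclideanSpace ℝ (Fin d)) 2) ≠ ⊤ := measure_ball_lt_top.ne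
  set ωR : ℝ := (volume (ball (0 : EuclideanSpace ℝ (Fin d)) 1)).toReal with hωR
  set VR : ℝ := (volume (ball (0 : EuclideanSpace ℝ (Fin d)) 2)).toReal with hVR
  have hωRpos : 0 < ωR := ENNReal.toReal_pos hωpos.ne' hωtop
  have hVRpos : 0 < VR := ENNReal.toReal_pos hVpos.ne' hVtop
  refine ⟨VR ^ (1/u - 1/p) * c * ((ωR / 8^d) ^ (1/p)), by positivity, ?_⟩
  intro j hj
  set e : EuclideanSpace ℝ (Fin d) := EuclideanSpace.single (⟨0, hd⟩ : Fin d) (1:ℝ) with he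
  have hene : ‖e‖ = 1 := by rw [he, EuclideanSpace.norm_single, norm_one]
  set v : ℕ → EuclideanSpace ℝ (Fin d) := fun k => (3/2 / (2:ℝ)^k) • e with hv
  set r : ℕ → ℝ := fun k => 1 / (8 * (2:ℝ)^k) with hr
  have hrpos : ∀ k, 0 < r k := fun k => by rw [hr]; positivity
  have hvnorm : ∀ k, ‖v k‖ = 3/2 / (2:ℝ)^k := by
    intro k
    rw [hv, norm_smul, Real.norm_eq_abs, abs_of_pos (by positivity), hene, mul_one]
  set f : EuclideanSpace ℝ (Fin d) → ℝ≥0∞ := fun x =>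
    (∑ k ∈ Finset.Icc 1 j, ENNReal.ofReal ((2 : ℝ) ^ ((k : ℝ) * s * q) *
        |∫ y, (2 : ℝ) ^ (k * d) * K ((2 : ℝ) ^ k • (x - y)) *
          ζ ((2 : ℝ) ^ j • y)| ^ q)) ^ (1 / q) with hf
  set β : ℕ → ℝ := fun k => (2:ℝ) ^ ((k:ℝ) * s) * (c * 2^(k*d) / 2^(j*d)) with hβ
  have hβpos : ∀ k, 0 < β k := fun k => by rw [hβ]; positivity
  -- Step 1: convolution lower bound
  have hconv : ∀ k, 1 ≤ k → k ≤ j → ∀ x ∈ ball (v k) (r k),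
      c * 2^(k*d) / 2^(j*d) ≤ ∫ y, (2:ℝ)^(k*d) * K ((2:ℝ)^k • (x - y)) * ζ ((2:ℝ)^j • y) := by
    intro k hk1 hkj x hx
    simp only [hv, hr] at hx
    have ha0 : (0:ℝ) < 2^k := by positivity
    have hb0 : (0:ℝ) < 2^j := by positivity
    have hab : (2:ℝ)^k ≤ 2^j := pow_le_pow_right₀ (by norm_num) hkj
    have ha1 : (1:ℝ) ≤ 2^k := one_le_pow₀ (by norm_num)
    have hysmall : ∀ y : EuclideanSpace ℝ (Fin d), ζ ((2:ℝ)^j • y) ≠ 0 → ‖y‖ < 1/(8 * 2^j) := by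
      intro y hy
      have h1 : ((2:ℝ)^j • y) ∈ tsupport ζ := subset_tsupport _ hy
      have h2 := hζ_supp h1
      rw [mem_ball_zero_iff, norm_smul, Real.norm_eq_abs, abs_of_pos hb0] at h2
      rw [lt_div_iff₀ (by positivity)] at h2 ⊢
      linarith [h2]
    have hζj_cont : Continuous (fun y : EuclideanSpace ℝ (Fin d) => ζ ((2:ℝ)^j • y)) :=
      hζ_smooth.continuous.comp (continuous_const_smul _)
    have hζj_cs : HasCompactSupport (fun y : EuclideanSpace ℝ (Fin d) => ζ ((2:ℝ)^j • y)) := by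
      apply HasCompactSupport.of_support_subset_isCompact
        (isCompact_closedBall (0 : EuclideanSpace ℝ (Fin d)) (1/8))
      intro y hy
      rw [Function.mem_support] at hy
      have := (hysmall y hy).le
      rw [mem_closedBall_zero_iff]
      calc ‖y‖ ≤ 1/(8*2^j) := this
      _ ≤ 1/8 := by rw [div_le_div_iff₀ (by positivity) (by norm_num)]; nlinarith
    have hζj_int : Integrable (fun y : EuclideanSpace ℝ (Fin d) => ζ ((2:ℝ)^j • y)) :=
      hζj_cont.integrable_of_hasCompactSupport hζj_cs
    have hζj_val : ∫ y : EuclideanSpace ℝ (Fin d), ζ ((2:ℝ)^j • y) = ((2:ℝ)^(j*d))⁻¹ := by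
      rw [MeasureTheory.Measure.integral_comp_smul_of_nonneg volume ζ ((2:ℝ)^j)
        (hR := by positivity)]
      rw [finrank_euclideanSpace_fin, hζ_one, smul_eq_mul, mul_one, ← pow_mul]
    have hpt : ∀ y : EuclideanSpace ℝ (Fin d),
        c * ζ ((2:ℝ)^j • y) ≤ K ((2:ℝ)^k • (x - y)) * ζ ((2:ℝ)^j • y) := by
      intro y
      rcases eq_or_ne (ζ ((2:ℝ)^j • y)) 0 with h0 | h0
      · rw [h0, mul_zero, mul_zero]
      · have hy := hysmall y h0
        rw [mem_ball, dist_eq_norm] at hx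
        have hxk : ‖(3/2 / (2:ℝ)^k) • e‖ = 3/2 / 2^k := by
          rw [norm_smul, Real.norm_eq_abs, abs_of_pos (by positivity), hene, mul_one]
        have hxv : |‖x‖ - 3/2 / (2:ℝ)^k| < 1 / (8 * 2^k) := by
          rw [← hxk]
          exact lt_of_le_of_lt (abs_norm_sub_norm_le x _) hx
        obtain ⟨hxl, hxr⟩ := abs_lt.mp hxv
        have hd1 : ‖x‖ - ‖y‖ ≤ ‖x - y‖ := norm_sub_norm_le _ _
        have hd2 : ‖x - y‖ ≤ ‖x‖ + ‖y‖ := norm_sub_le _ _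
        have hns : ‖(2:ℝ)^k • (x - y)‖ = 2^k * ‖x - y‖ := by
          rw [norm_smul, Real.norm_eq_abs, abs_of_pos ha0]
        have hy0 : (0:ℝ) ≤ ‖y‖ := norm_nonneg _
        have e1 : (2:ℝ)^k * (3/2 / 2^k) = 3/2 := by field_simp
        have e2 : (2:ℝ)^k * (1/(8 * 2^k)) = 1/8 := by field_simp
        have L3 : (2:ℝ)^k * ‖x‖ ≤ 3/2 + 1/8 := by
          have h := mul_le_mul_of_nonneg_left hxr.le ha0.le
          rw [mul_sub, e1] at h
          linarith [e2 ▸ h]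
        have L4 : 3/2 - 1/8 ≤ (2:ℝ)^k * ‖x‖ := by
          have h := mul_le_mul_of_nonneg_left hxl.le ha0.le
          rw [mul_neg, e2, mul_sub, e1] at h
          linarith
        have L5 : (2:ℝ)^k * ‖y‖ ≤ 1/8 := by
          have h1 : (2:ℝ)^k * ‖y‖ ≤ 2^k * (1/(8 * 2^j)) :=
            mul_le_mul_of_nonneg_left hy.le ha0.le
          have h2 : (2:ℝ)^k * (1/(8 * 2^j)) ≤ 2^j * (1/(8 * 2^j)) :=
            mul_le_mul_of_nonneg_right hab (by positivity)
          have h3 : (2:ℝ)^j * (1/(8 * 2^j)) = 1/8 := by field_simp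
          linarith
        have hge : 5/4 ≤ ‖(2:ℝ)^k • (x - y)‖ := by
          rw [hns]
          have M1 := mul_le_mul_of_nonneg_left hd1 ha0.le
          rw [mul_sub] at M1
          linarith
        have hle : ‖(2:ℝ)^k • (x - y)‖ ≤ 7/4 := by
          rw [hns]
          have M2 := mul_le_mul_of_nonneg_left hd2 ha0.le
          rw [mul_add] at M2
          linarith
        exact mul_le_mul_of_nonneg_right (hK _ hge hle) (hζ_nonneg _)
    have hKcont : Continuous (fun y : EuclideanSpace ℝ (Fin d) =>
        K ((2:ℝ)^k • (x - y)) * ζ ((2:ℝ)^j • y)) :=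
      by exact (K.continuous.comp (by fun_prop : Continuous fun y : EuclideanSpace ℝ (Fin d) =>
        (2:ℝ)^k • (x - y))).mul hζj_cont
    have hKcs : HasCompactSupport (fun y : EuclideanSpace ℝ (Fin d) =>
        K ((2:ℝ)^k • (x - y)) * ζ ((2:ℝ)^j • y)) := hζj_cs.mul_left
    have hmono : c * ((2:ℝ)^(j*d))⁻¹ ≤ ∫ y, K ((2:ℝ)^k • (x - y)) * ζ ((2:ℝ)^j • y) := by
      rw [← hζj_val, ← integral_const_mul]
      exact integral_mono (hζj_int.const_mul c) (hKcont.integrable_of_hasCompactSupport hKcs) hpt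
    calc c * 2^(k*d) / 2^(j*d) = 2^(k*d) * (c * ((2:ℝ)^(j*d))⁻¹) := by ring
    _ ≤ 2^(k*d) * ∫ y, K ((2:ℝ)^k • (x - y)) * ζ ((2:ℝ)^j • y) :=
        mul_le_mul_of_nonneg_left hmono (by positivity)
    _ = ∫ y, (2:ℝ)^(k*d) * K ((2:ℝ)^k • (x - y)) * ζ ((2:ℝ)^j • y) := by
        rw [← integral_const_mul]; simp_rw [mul_assoc]
  -- Step 2: pointwise lower bound for f
  have hfx : ∀ k, 1 ≤ k → k ≤ j → ∀ x ∈ ball (v k) (r k), ENNReal.ofReal (β k) ≤ f x := by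
    intro k hk1 hkj x hx
    have h1 := hconv k hk1 hkj x hx
    have h2 : c * 2^(k*d) / 2^(j*d) ≤
        |∫ y, (2:ℝ)^(k*d) * K ((2:ℝ)^k • (x - y)) * ζ ((2:ℝ)^j • y)| :=
      h1.trans (le_abs_self _)
    have hβq : β k ^ q ≤ (2 : ℝ) ^ ((k : ℝ) * s * q) *
        |∫ y, (2:ℝ)^(k*d) * K ((2:ℝ)^k • (x - y)) * ζ ((2:ℝ)^j • y)| ^ q := by
      rw [hβ]
      have hmul : ((2:ℝ) ^ ((k:ℝ) * s) * (c * 2^(k*d) / 2^(j*d))) ^ q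
          = (2:ℝ) ^ ((k:ℝ) * s * q) * (c * 2^(k*d) / 2^(j*d)) ^ q := by
        rw [Real.mul_rpow (by positivity) (by positivity),
          ← Real.rpow_mul (by norm_num : (0:ℝ) ≤ 2)]
      rw [hmul]
      exact mul_le_mul_of_nonneg_left (Real.rpow_le_rpow (by positivity) h2 hq.le)
        (by positivity)
    have h3 : ENNReal.ofReal (β k ^ q) ≤ ENNReal.ofReal ((2 : ℝ) ^ ((k : ℝ) * s * q) *
        |∫ y, (2:ℝ)^(k*d) * K ((2:ℝ)^k • (x - y)) * ζ ((2:ℝ)^j • y)| ^ q) :=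
      ENNReal.ofReal_le_ofReal hβq
    have h4 : ENNReal.ofReal ((2 : ℝ) ^ ((k : ℝ) * s * q) *
        |∫ y, (2:ℝ)^(k*d) * K ((2:ℝ)^k • (x - y)) * ζ ((2:ℝ)^j • y)| ^ q) ≤
        ∑ k' ∈ Finset.Icc 1 j, ENNReal.ofReal ((2 : ℝ) ^ ((k' : ℝ) * s * q) *
          |∫ y, (2:ℝ)^(k'*d) * K ((2:ℝ)^k' • (x - y)) * ζ ((2:ℝ)^j • y)| ^ q) := by
      exact Finset.single_le_sum (f := fun k' : ℕ => ENNReal.ofReal ((2 : ℝ) ^ ((k' : ℝ) * s * q) *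
        |∫ y, (2:ℝ)^(k'*d) * K ((2:ℝ)^k' • (x - y)) * ζ ((2:ℝ)^j • y)| ^ q))
        (fun _ _ => zero_le) (Finset.mem_Icc.mpr ⟨hk1, hkj⟩)
    have h5 : ENNReal.ofReal (β k ^ q) ^ (1/q) ≤ f x := by
      rw [hf]
      exact ENNReal.rpow_le_rpow (h3.trans h4) (by positivity)
    rwa [← ENNReal.ofReal_rpow_of_pos (hβpos k), ← ENNReal.rpow_mul,
      mul_one_div_cancel hq.ne', ENNReal.rpow_one] at h5
  -- Step 3: disjointness of the balls
  have hdisj : (Finset.Icc 1 j : Set ℕ).PairwiseDisjoint (fun k => ball (v k) (r k)) := by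
    have key : ∀ k k' : ℕ, k < k' → Disjoint (ball (v k) (r k)) (ball (v k') (r k')) := by
      intro k k' hkk'
      rw [Set.disjoint_left]
      intro x hxk hxk'
      rw [mem_ball, dist_eq_norm] at hxk hxk'
      have h2k : (0:ℝ) < 2^k := by positivity
      have h2k' : (0:ℝ) < 2^k' := by positivity
      have hpow : (2:ℝ) * 2^k ≤ 2^k' := by
        calc (2:ℝ) * 2^k = 2^(k+1) := by ring
        _ ≤ 2^k' := pow_le_pow_right₀ (by norm_num) hkk'
      have hl1 : ‖v k‖ - ‖x‖ ≤ ‖x - v k‖ := by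
        rw [norm_sub_rev]; exact norm_sub_norm_le _ _
      have hl2 : ‖x‖ - ‖v k'‖ ≤ ‖x - v k'‖ := norm_sub_norm_le _ _
      rw [hvnorm k] at hl1
      rw [hvnorm k'] at hl2
      simp only [hr] at hxk hxk'
      have hlow : 3/2 / 2^k - 1/(8 * 2^k) < ‖x‖ := by linarith
      have hup : ‖x‖ < 3/2 / 2^k' + 1/(8 * 2^k') := by linarith
      have hA : 3/2 / (2:ℝ)^k - 1/(8 * (2:ℝ)^k) = 11/(8 * (2:ℝ)^k) := by field_simp; ring
      have hB : 3/2 / (2:ℝ)^k' + 1/(8 * (2:ℝ)^k') = 13/(8 * (2:ℝ)^k') := by field_simp; ring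
      rw [hA] at hlow
      rw [hB] at hup
      have hcmp : 13/(8 * (2:ℝ)^k') ≤ 11/(8 * 2^k) := by
        rw [div_le_div_iff₀ (by positivity) (by positivity)]
        nlinarith
      linarith
    intro a ha b hb hab
    rcases lt_or_gt_of_ne hab with h | h
    · exact key a b h
    · exact (key b a h).symm
  -- Step 4: balls inside the big ball
  have hsub : ∀ k, 1 ≤ k → ball (v k) (r k) ⊆ ball (0 : EuclideanSpace ℝ (Fin d)) 2 := by
    intro k hk1 x hx
    rw [mem_ball, dist_eq_norm] at hx
    rw [mem_ball_zero_iff]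
    have h1 : ‖x‖ - ‖v k‖ ≤ ‖x - v k‖ := norm_sub_norm_le _ _
    have h2 : (1:ℝ) ≤ 2^k := one_le_pow₀ (by norm_num)
    have h3 : ‖v k‖ ≤ 3/2 := by
      rw [hvnorm k, div_le_iff₀ (by positivity)]; nlinarith
    have h4 : r k ≤ 1/8 := by
      rw [hr]
      rw [div_le_div_iff₀ (by positivity) (by norm_num)]
      nlinarith
    linarith
  -- Step 5: lintegral lower bound
  have hlin : ∑ k ∈ Finset.Icc 1 j, ENNReal.ofReal (β k ^ p) *
        (ENNReal.ofReal (r k ^ d) * volume (ball (0 : EuclideanSpace ℝ (Fin d)) 1)) ≤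
      ∫⁻ x in ball (0 : EuclideanSpace ℝ (Fin d)) 2, f x ^ p := by
    have hball : ∀ k : ℕ, volume (ball (v k) (r k)) =
        ENNReal.ofReal (r k ^ d) * volume (ball (0 : EuclideanSpace ℝ (Fin d)) 1) := by
      intro k
      have : Nontrivial (EuclideanSpace ℝ (Fin d)) := by
        refine ⟨0, e, fun h => ?_⟩
        have := congrArg norm h
        rw [norm_zero, hene] at this; norm_num at this
      rw [Measure.addHaar_ball volume _ (hrpos k).le, finrank_euclideanSpace_fin]
    calc ∑ k ∈ Finset.Icc 1 j, ENNReal.ofReal (β k ^ p) *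
          (ENNReal.ofReal (r k ^ d) * volume (ball (0 : EuclideanSpace ℝ (Fin d)) 1))
        ≤ ∑ k ∈ Finset.Icc 1 j, ∫⁻ x in ball (v k) (r k), f x ^ p := by
          apply Finset.sum_le_sum
          intro k hk
          rw [Finset.mem_Icc] at hk
          rw [← hball k, ← setLIntegral_const]
          apply setLIntegral_mono' measurableSet_ball
          intro x hx
          rw [← ENNReal.ofReal_rpow_of_pos (hβpos k)]
          exact ENNReal.rpow_le_rpow (hfx k hk.1 hk.2 x hx) hp.le
      _ = ∫⁻ x in ⋃ k ∈ Finset.Icc 1 j, ball (v k) (r k), f x ^ p := by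
          rw [lintegral_biUnion_finset hdisj (fun k _ => measurableSet_ball)]
      _ ≤ ∫⁻ x in ball (0 : EuclideanSpace ℝ (Fin d)) 2, f x ^ p := by
          apply lintegral_mono_set
          apply Set.iUnion₂_subset
          intro k hk
          rw [Finset.mem_Icc] at hk
          exact hsub k hk.1
  -- Step 6: from morreyNorm sup
  have hsup : volume (ball (0 : EuclideanSpace ℝ (Fin d)) 2) ^ (1/u - 1/p) *
      (∫⁻ x in ball (0 : EuclideanSpace ℝ (Fin d)) 2, f x ^ p) ^ (1/p) ≤
      morreyNorm d p u f := by
    rw [morreyNorm]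
    exact le_iSup_of_le 0 (le_iSup_of_le 2 (le_iSup_of_le two_pos le_rfl))
  refine le_trans ?_ hsup
  -- Step 7: numbers
  have hVol : volume (ball (0 : EuclideanSpace ℝ (Fin d)) 2) = ENNReal.ofReal VR :=
    (ENNReal.ofReal_toReal hVtop).symm
  have hω : volume (ball (0 : EuclideanSpace ℝ (Fin d)) 1) = ENNReal.ofReal ωR :=
    (ENNReal.ofReal_toReal hωtop).symm
  set T : ℝ := ∑ k ∈ Finset.Icc 1 j, β k ^ p * (r k ^ d * ωR) with hT
  have hTsum : ∑ k ∈ Finset.Icc 1 j, ENNReal.ofReal (β k ^ p) *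
      (ENNReal.ofReal (r k ^ d) * volume (ball (0 : EuclideanSpace ℝ (Fin d)) 1)) =
      ENNReal.ofReal T := by
    rw [hT, hω, ENNReal.ofReal_sum_of_nonneg]
    · apply Finset.sum_congr rfl
      intro k _
      rw [ENNReal.ofReal_mul (by positivity), ENNReal.ofReal_mul (by positivity)]
    · intro k _
      positivity
  have hterm : ∀ k : ℕ, β k ^ p * (r k ^ d * ωR) =
      (c^p * ωR * (2:ℝ)^(-(3:ℝ)*(d:ℝ)) * (2:ℝ)^(-(j:ℝ)*(d:ℝ)*p)) *
        (2:ℝ)^((k:ℝ)*(s*p+(d:ℝ)*p-(d:ℝ))) := by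
    intro k
    simp only [hβ, hr]
    have h2 : (0:ℝ) < 2 := two_pos
    rw [show (8:ℝ) = 2^(3:ℕ) by norm_num]
    rw [div_pow, one_pow, mul_pow, ← pow_mul, ← pow_mul]
    simp only [← Real.rpow_natCast (2:ℝ)]
    rw [Real.mul_rpow (by positivity) (by positivity),
      Real.div_rpow (by positivity) (by positivity),
      Real.mul_rpow (by positivity) (by positivity),
      ← Real.rpow_mul (by norm_num), ← Real.rpow_mul (by norm_num),
      ← Real.rpow_mul (by norm_num)]
    rw [← Real.rpow_add h2 ((3*d : ℕ):ℝ) ((k*d : ℕ):ℝ)]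
    rw [one_div, div_eq_mul_inv, ← Real.rpow_neg h2.le, ← Real.rpow_neg h2.le]
    rw [show (2:ℝ) ^ ((k:ℝ) * s * p) * (c ^ p * (2:ℝ) ^ (((k * d : ℕ):ℝ) * p) *
        (2:ℝ) ^ (-(((j * d : ℕ):ℝ) * p))) * ((2:ℝ) ^ (-(((3*d : ℕ):ℝ) + ((k*d : ℕ):ℝ))) * ωR) =
      (c ^ p * ωR) * ((2:ℝ) ^ ((k:ℝ) * s * p) * ((2:ℝ) ^ (((k * d : ℕ):ℝ) * p) *
        ((2:ℝ) ^ (-(((j * d : ℕ):ℝ) * p)) * (2:ℝ) ^ (-(((3*d : ℕ):ℝ) + ((k*d : ℕ):ℝ)))))) from by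
          ring]
    rw [show (c^p * ωR * (2:ℝ)^(-(3:ℝ)*(d:ℝ)) * (2:ℝ)^(-(j:ℝ)*(d:ℝ)*p)) *
        (2:ℝ)^((k:ℝ)*(s*p+(d:ℝ)*p-(d:ℝ))) =
      (c ^ p * ωR) * ((2:ℝ)^(-(3:ℝ)*(d:ℝ)) * ((2:ℝ)^(-(j:ℝ)*(d:ℝ)*p) *
        (2:ℝ)^((k:ℝ)*(s*p+(d:ℝ)*p-(d:ℝ))))) from by ring]
    congr 1
    rw [← Real.rpow_add h2, ← Real.rpow_add h2, ← Real.rpow_add h2, ← Real.rpow_add h2,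
      ← Real.rpow_add h2]
    congr 1
    push_cast
    ring
  have hsum1 : ∑ k ∈ Finset.Icc 1 j, (2:ℝ)^((k:ℝ)*(s*p+(d:ℝ)*p-(d:ℝ))) =
      (2:ℝ)^((j:ℝ)*(d:ℝ)*p) * ((2:ℝ)^((j:ℝ)*(s*p-(d:ℝ))) *
        ∑ ℓ ∈ Finset.range j, (2 : ℝ) ^ ((ℓ : ℝ) * p * (d * (1 / p - 1) - s))) := by
    rw [Finset.mul_sum, Finset.mul_sum]
    rw [← Finset.Ico_add_one_right_eq_Icc, Finset.sum_Ico_eq_sum_range,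
      ← Finset.sum_range_reflect (fun i => (2:ℝ)^(((1 + i : ℕ):ℝ)*(s*p+(d:ℝ)*p-(d:ℝ)))) _]
    apply Finset.sum_congr (by norm_num)
    intro i hi
    rw [Finset.mem_range] at hi
    rw [← Real.rpow_add two_pos, ← Real.rpow_add two_pos]
    congr 1
    have hji : (((1 + (j + 1 - 1 - 1 - i) : ℕ)):ℝ) = (j:ℝ) - (i:ℝ) := by
      have : (1 + (j + 1 - 1 - 1 - i) : ℕ) = j - i := by omega
      rw [this, Nat.cast_sub hi.le]
    rw [hji]
    field_simp
    ring
  have hTval : T = (c^p * ωR * (2:ℝ)^(-(3:ℝ)*(d:ℝ))) * (2:ℝ)^((j:ℝ)*(s*p-(d:ℝ))) *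
      ∑ ℓ ∈ Finset.range j, (2 : ℝ) ^ ((ℓ : ℝ) * p * (d * (1 / p - 1) - s)) := by
    rw [hT]
    rw [Finset.sum_congr rfl (fun k _ => hterm k), ← Finset.mul_sum, hsum1]
    have hcan : (2:ℝ)^(-(j:ℝ)*(d:ℝ)*p) * (2:ℝ)^((j:ℝ)*(d:ℝ)*p) = 1 := by
      rw [← Real.rpow_add two_pos]
      norm_num
    calc (c^p * ωR * (2:ℝ)^(-(3:ℝ)*(d:ℝ)) * (2:ℝ)^(-(j:ℝ)*(d:ℝ)*p)) *
          ((2:ℝ)^((j:ℝ)*(d:ℝ)*p) * ((2:ℝ)^((j:ℝ)*(s*p-(d:ℝ))) *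
            ∑ ℓ ∈ Finset.range j, (2 : ℝ) ^ ((ℓ : ℝ) * p * (d * (1 / p - 1) - s))))
        = (c^p * ωR * (2:ℝ)^(-(3:ℝ)*(d:ℝ))) * ((2:ℝ)^(-(j:ℝ)*(d:ℝ)*p) * (2:ℝ)^((j:ℝ)*(d:ℝ)*p)) *
          ((2:ℝ)^((j:ℝ)*(s*p-(d:ℝ))) *
            ∑ ℓ ∈ Finset.range j, (2 : ℝ) ^ ((ℓ : ℝ) * p * (d * (1 / p - 1) - s))) := by ring
      _ = _ := by rw [hcan]; ring
  have hfinal : VR ^ (1/u - 1/p) * c * ((ωR / 8^d) ^ (1/p)) *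
      (2 : ℝ) ^ ((j : ℝ) * (s - d / p)) *
      (∑ ℓ ∈ Finset.range j, (2 : ℝ) ^ ((ℓ : ℝ) * p * (d * (1 / p - 1) - s))) ^ (1 / p) =
      VR ^ (1/u - 1/p) * T ^ (1/p) := by
    have hS : (0:ℝ) ≤ ∑ ℓ ∈ Finset.range j, (2 : ℝ) ^ ((ℓ : ℝ) * p * (d * (1 / p - 1) - s)) :=
      Finset.sum_nonneg (fun i _ => by positivity)
    have e8 : (8:ℝ)^d = (2:ℝ)^((3:ℝ)*(d:ℝ)) := by
      rw [show (8:ℝ) = 2^(3:ℕ) by norm_num, ← pow_mul, ← Real.rpow_natCast]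
      congr 1
      push_cast
      ring
    have eω : ωR / 8^d = ωR * (2:ℝ)^(-(3:ℝ)*(d:ℝ)) := by
      rw [e8, div_eq_mul_inv, ← Real.rpow_neg two_pos.le, neg_mul]
    have ecp : (c^p)^(1/p) = c := by
      rw [← Real.rpow_mul hc.le, mul_one_div_cancel hp.ne', Real.rpow_one]
    have e2j : ((2:ℝ)^((j:ℝ)*(s*p-(d:ℝ))))^(1/p) = (2:ℝ)^((j:ℝ)*(s-(d:ℝ)/p)) := by
      rw [← Real.rpow_mul (by norm_num : (0:ℝ) ≤ 2)]
      congr 1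
      field_simp
    rw [hTval]
    rw [show (c^p * ωR * (2:ℝ)^(-(3:ℝ)*(d:ℝ))) * (2:ℝ)^((j:ℝ)*(s*p-(d:ℝ))) *
        (∑ ℓ ∈ Finset.range j, (2 : ℝ) ^ ((ℓ : ℝ) * p * (d * (1 / p - 1) - s))) =
      (c^p) * ((ωR * (2:ℝ)^(-(3:ℝ)*(d:ℝ))) * ((2:ℝ)^((j:ℝ)*(s*p-(d:ℝ))) *
        (∑ ℓ ∈ Finset.range j, (2 : ℝ) ^ ((ℓ : ℝ) * p * (d * (1 / p - 1) - s))))) from by ring]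
    rw [Real.mul_rpow (by positivity) (mul_nonneg (mul_nonneg hωRpos.le (by positivity)) (mul_nonneg (by positivity) hS)),
      Real.mul_rpow (by positivity) (mul_nonneg (by positivity) hS),
      Real.mul_rpow (by positivity) hS]
    rw [ecp, e2j, eω]
    ring
  calc ENNReal.ofReal (VR ^ (1/u - 1/p) * c * ((ωR / 8^d) ^ (1/p)) *
        (2 : ℝ) ^ ((j : ℝ) * (s - d / p)) *
        (∑ ℓ ∈ Finset.range j, (2 : ℝ) ^ ((ℓ : ℝ) * p * (d * (1 / p - 1) - s))) ^ (1 / p))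
      = ENNReal.ofReal (VR ^ (1/u - 1/p)) * ENNReal.ofReal (T ^ (1/p)) := by
        rw [hfinal, ENNReal.ofReal_mul (by positivity)]
    _ ≤ volume (ball (0 : EuclideanSpace ℝ (Fin d)) 2) ^ (1/u - 1/p) *
        (∫⁻ x in ball (0 : EuclideanSpace ℝ (Fin d)) 2, f x ^ p) ^ (1/p) := by
        apply mul_le_mul'
        · rw [hVol, ← ENNReal.ofReal_rpow_of_pos hVRpos]
        · have hTpos : 0 < T := by
            rw [hT]
            apply Finset.sum_pos
            · intro k _
              have := hβpos k
              have := hrpos k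
              positivity
            · exact ⟨1, Finset.mem_Icc.mpr ⟨le_refl 1, hj⟩⟩
          rw [← ENNReal.ofReal_rpow_of_pos hTpos, ← hTsum]
          exact ENNReal.rpow_le_rpow hlin (by positivity)
end

section
/- Let d ≥ 1, 0 < p ≤ u < ∞, s ∈ ℝ and c > 0. Let K ∈ S(ℝ^d) be a real-valued Schwartz function with K(y) ≥ c for all y with 5/4 ≤ |y| ≤ 7/4, and let ζ : ℝ^d → [0, ∞) be smooth with support contained in B(0, 1/8) and ∫_{ℝ^d} ζ(z) dz = 1. For k ∈ ℕ set K_k(x) := 2^{kd} K(2^k x), and for j ∈ ℕ set ζ_j(x) := ζ(2^j x). Then there exists a constant C > 0, independent of j, such that for every j ∈ ℕ: ‖ sup_{1 ≤ k ≤ j} 2^{ks} |(K_k ∗ ζ_j)(·)| ∣ M^u_p ‖ ≥ C · 2^{j(s − d/p)} · max_{0 ≤ ℓ ≤ j−1} 2^{ℓ (d(1/p − 1) − s)}. -/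
open MeasureTheory Metric ENNReal

set_option maxHeartbeats 1000000 in
theorem statement16 (d : ℕ) (hd : 1 ≤ d) (p u s : ℝ) (hp : 0 < p) (hpu : p ≤ u)
    (c : ℝ) (hc : 0 < c)
    (K : SchwartzMap (EuclideanSpace ℝ (Fin d)) ℝ)
    (hK : ∀ y : EuclideanSpace ℝ (Fin d), 5 / 4 ≤ ‖y‖ → ‖y‖ ≤ 7 / 4 → c ≤ K y)
    (ζ : EuclideanSpace ℝ (Fin d) → ℝ) (hζ_smooth : ContDiff ℝ (⊤ : ℕ∞) ζ)
    (hζ_nonneg : ∀ z, 0 ≤ ζ z)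
    (hζ_supp : tsupport ζ ⊆ ball (0 : EuclideanSpace ℝ (Fin d)) (1 / 8))
    (hζ_one : ∫ z, ζ z = 1) :
    ∃ C : ℝ, 0 < C ∧ ∀ j : ℕ, 1 ≤ j →
      ENNReal.ofReal (C * (2 : ℝ) ^ ((j : ℝ) * (s - d / p))) *
          (⨆ ℓ ∈ Finset.range j,
            ENNReal.ofReal ((2 : ℝ) ^ ((ℓ : ℝ) * (d * (1 / p - 1) - s)))) ≤
        morreyNorm d p u (fun x =>
          ⨆ k ∈ Finset.Icc 1 j, ENNReal.ofReal ((2 : ℝ) ^ ((k : ℝ) * s) *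
            |∫ y, (2 : ℝ) ^ (k * d) * K ((2 : ℝ) ^ k • (x - y)) *
              ζ ((2 : ℝ) ^ j • y)|)) := by
  have hu : 0 < u := hp.trans_le hpu
  have hV0 : volume (ball (0 : EuclideanSpace ℝ (Fin d)) 1) ≠ 0 :=
    (measure_ball_pos volume 0 one_pos).ne'
  have hVtop : volume (ball (0 : EuclideanSpace ℝ (Fin d)) 1) ≠ ⊤ :=
    measure_ball_lt_top.ne
  set v : ℝ := (volume (ball (0 : EuclideanSpace ℝ (Fin d)) 1)).toReal with hv_def
  have hv : 0 < v := ENNReal.toReal_pos hV0 hVtop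
  have hw : 0 < ((8:ℝ) ^ (-(d:ℝ)) * v) ^ (1/u) :=
    Real.rpow_pos_of_pos (mul_pos (Real.rpow_pos_of_pos (by norm_num) _) hv) _
  refine ⟨c * ((8:ℝ) ^ (-(d:ℝ)) * v) ^ (1/u), mul_pos hc hw, ?_⟩
  intro j hj
  simp_rw [ENNReal.mul_iSup]
  refine iSup₂_le fun ℓ hℓ => ?_
  have hℓj : ℓ < j := Finset.mem_range.mp hℓ
  set k := j - ℓ with hk_def
  have hk1 : 1 ≤ k := by omega
  have hkj : k ≤ j := by omega
  have hkℓ : k + ℓ = j := by omega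
  have hcast : (ℓ : ℝ) = (j : ℝ) - (k : ℝ) := by
    have : (k:ℝ) + (ℓ:ℝ) = (j:ℝ) := by exact_mod_cast congrArg (Nat.cast : ℕ → ℝ) hkℓ
    linarith
  have h2k : (0:ℝ) < 2 ^ k := by positivity
  have h2j : (0:ℝ) < 2 ^ j := by positivity
  have hρ : (0:ℝ) < ((2:ℝ) ^ k)⁻¹ := by positivity
  set ρ : ℝ := ((2:ℝ) ^ k)⁻¹ with hρ_def
  set R₀ : ℝ := ρ / 8 with hR₀_def
  have hR₀ : 0 < R₀ := by positivity
  set y₀ : EuclideanSpace ℝ (Fin d) :=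
    EuclideanSpace.single (⟨0, hd⟩ : Fin d) ((3/2) * ρ) with hy₀_def
  have hy₀norm : ‖y₀‖ = 3/2 * ρ := by
    rw [hy₀_def, EuclideanSpace.norm_single, Real.norm_eq_abs, abs_of_pos (by positivity)]
  -- support of scaled ζ
  have hζj_supp : ∀ y : EuclideanSpace ℝ (Fin d), ζ ((2:ℝ)^j • y) ≠ 0 →
      ‖y‖ < ((2:ℝ)^j)⁻¹ * (1/8) := by
    intro y hy
    have h1 : (2:ℝ)^j • y ∈ tsupport ζ := subset_tsupport ζ hy
    have h2 := hζ_supp h1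
    rw [mem_ball_zero_iff, norm_smul, Real.norm_eq_abs, abs_of_pos h2j] at h2
    rw [show ‖y‖ = ((2:ℝ)^j)⁻¹ * ((2:ℝ)^j * ‖y‖) by field_simp]
    exact mul_lt_mul_of_pos_left h2 (by positivity)
  have hζj_cont : Continuous fun y : EuclideanSpace ℝ (Fin d) => ζ ((2:ℝ)^j • y) :=
    hζ_smooth.continuous.comp (continuous_const_smul _)
  have hζj_cs : HasCompactSupport fun y : EuclideanSpace ℝ (Fin d) => ζ ((2:ℝ)^j • y) := by
    apply HasCompactSupport.intro
      (isCompact_closedBall (0 : EuclideanSpace ℝ (Fin d)) (((2:ℝ)^j)⁻¹ * (1/8)))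
    intro y hy
    by_contra h
    exact hy (mem_closedBall_zero_iff.mpr (hζj_supp y h).le)
  have hζj_int : Integrable fun y : EuclideanSpace ℝ (Fin d) => ζ ((2:ℝ)^j • y) :=
    hζj_cont.integrable_of_hasCompactSupport hζj_cs
  have h_int_ζ : ∫ y : EuclideanSpace ℝ (Fin d), ζ ((2:ℝ)^j • y) = (((2:ℝ)^j)^d)⁻¹ := by
    have := MeasureTheory.Measure.integral_comp_smul_of_nonneg (μ := volume) ζ ((2:ℝ)^j)
      (hR := h2j.le)
    rw [hζ_one, finrank_euclideanSpace_fin, smul_eq_mul, mul_one] at this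
    exact this
  -- pointwise lower bound for the convolution on the annulus
  have hlower : ∀ x : EuclideanSpace ℝ (Fin d), x ∈ ball y₀ R₀ →
      c * (2:ℝ)^(k*d) * (((2:ℝ)^j)^d)⁻¹ ≤
        |∫ y, (2:ℝ)^(k*d) * K ((2:ℝ)^k • (x - y)) * ζ ((2:ℝ)^j • y)| := by
    intro x hx
    have hxy₀ : ‖x - y₀‖ < R₀ := mem_ball_iff_norm.mp hx
    have hxn1 : 11/8 * ρ < ‖x‖ := by
      have h2 : ‖y₀‖ - ‖x‖ ≤ ‖y₀ - x‖ := norm_sub_norm_le y₀ x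
      rw [norm_sub_rev] at h2
      rw [hR₀_def] at hxy₀
      linarith [hy₀norm ▸ h2]
    have hxn2 : ‖x‖ < 13/8 * ρ := by
      have h2 : ‖x‖ ≤ ‖x - y₀‖ + ‖y₀‖ := by
        calc ‖x‖ = ‖x - y₀ + y₀‖ := by rw [sub_add_cancel]
        _ ≤ ‖x - y₀‖ + ‖y₀‖ := norm_add_le _ _
      rw [hR₀_def] at hxy₀
      linarith [hy₀norm ▸ h2]
    have hpt : ∀ y, c * (2:ℝ)^(k*d) * ζ ((2:ℝ)^j • y) ≤
        (2:ℝ)^(k*d) * K ((2:ℝ)^k • (x - y)) * ζ ((2:ℝ)^j • y) := by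
      intro y
      rcases eq_or_ne (ζ ((2:ℝ)^j • y)) 0 with h0 | h0
      · simp [h0]
      · have hyn : ‖y‖ < ((2:ℝ)^j)⁻¹ * (1/8) := hζj_supp y h0
        have h2kj : ((2:ℝ)^j)⁻¹ ≤ ρ := by
          rw [hρ_def]
          exact inv_anti₀ h2k (by gcongr <;> norm_num)
        have hyρ : ‖y‖ < ρ * (1/8) := lt_of_lt_of_le hyn (by linarith)
        have hnorm : ‖(2:ℝ)^k • (x - y)‖ = 2^k * ‖x - y‖ := by
          rw [norm_smul, Real.norm_eq_abs, abs_of_pos h2k]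
        have hinv : (2:ℝ)^k * ρ = 1 := by rw [hρ_def]; field_simp
        have hd1 : ‖x‖ - ‖y‖ ≤ ‖x - y‖ := norm_sub_norm_le x y
        have hd2 : ‖x - y‖ ≤ ‖x‖ + ‖y‖ := norm_sub_le x y
        have hxy1 : 5/4 ≤ ‖(2:ℝ)^k • (x - y)‖ := by
          rw [hnorm]
          have h1 : 5/4 * ρ ≤ ‖x - y‖ := by linarith
          calc (5:ℝ)/4 = 2^k * (5/4 * ρ) := by rw [show (2:ℝ)^k * (5/4 * ρ) = 5/4 * ((2:ℝ)^k * ρ) by ring, hinv]; ring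
          _ ≤ 2^k * ‖x - y‖ := mul_le_mul_of_nonneg_left h1 h2k.le
        have hxy2 : ‖(2:ℝ)^k • (x - y)‖ ≤ 7/4 := by
          rw [hnorm]
          have h1 : ‖x - y‖ ≤ 7/4 * ρ := by linarith
          calc (2:ℝ)^k * ‖x - y‖ ≤ 2^k * (7/4 * ρ) := mul_le_mul_of_nonneg_left h1 h2k.le
          _ = 7/4 := by rw [show (2:ℝ)^k * (7/4 * ρ) = 7/4 * ((2:ℝ)^k * ρ) by ring, hinv]; ring
        have hKc : c ≤ K ((2:ℝ)^k • (x - y)) := hK _ hxy1 hxy2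
        have hζpos : 0 ≤ ζ ((2:ℝ)^j • y) := hζ_nonneg _
        have hP : (0:ℝ) < (2:ℝ)^(k*d) := by positivity
        calc c * (2:ℝ)^(k*d) * ζ ((2:ℝ)^j • y) = (2:ℝ)^(k*d) * (c * ζ ((2:ℝ)^j • y)) := by ring
        _ ≤ (2:ℝ)^(k*d) * (K ((2:ℝ)^k • (x - y)) * ζ ((2:ℝ)^j • y)) :=
          mul_le_mul_of_nonneg_left (mul_le_mul_of_nonneg_right hKc hζpos) hP.le
        _ = (2:ℝ)^(k*d) * K ((2:ℝ)^k • (x - y)) * ζ ((2:ℝ)^j • y) := by ring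
    have hg_cont : Continuous fun y : EuclideanSpace ℝ (Fin d) =>
        (2:ℝ)^(k*d) * K ((2:ℝ)^k • (x - y)) * ζ ((2:ℝ)^j • y) := by
      apply Continuous.mul
      · exact continuous_const.mul
          (K.continuous.comp (by fun_prop : Continuous fun y : EuclideanSpace ℝ (Fin d) => (2:ℝ)^k • (x - y)))
      · exact hζj_cont
    have hg_cs : HasCompactSupport fun y : EuclideanSpace ℝ (Fin d) =>
        (2:ℝ)^(k*d) * K ((2:ℝ)^k • (x - y)) * ζ ((2:ℝ)^j • y) :=
      HasCompactSupport.mul_left hζj_cs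
    have hg_int : Integrable fun y : EuclideanSpace ℝ (Fin d) =>
        (2:ℝ)^(k*d) * K ((2:ℝ)^k • (x - y)) * ζ ((2:ℝ)^j • y) :=
      hg_cont.integrable_of_hasCompactSupport hg_cs
    have hh_int : Integrable fun y : EuclideanSpace ℝ (Fin d) =>
        c * (2:ℝ)^(k*d) * ζ ((2:ℝ)^j • y) := hζj_int.const_mul _
    have h5 := integral_mono hh_int hg_int hpt
    rw [integral_const_mul, h_int_ζ] at h5
    exact le_trans (by linarith) (le_abs_self _)
  -- the key real inequality
  have hreal : c * ((8:ℝ) ^ (-(d:ℝ)) * v) ^ (1/u) * (2:ℝ)^((j:ℝ)*(s - (d:ℝ)/p)) *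
      (2:ℝ)^((ℓ:ℝ)*((d:ℝ)*(1/p-1)-s)) ≤
      (2:ℝ)^((k:ℝ)*s) * (c * (2:ℝ)^(k*d) * (((2:ℝ)^j)^d)⁻¹) * ((R₀^d * v)^(1/u)) := by
    have e1 : (2:ℝ)^(k*d) = (2:ℝ)^(((k:ℝ))*(d:ℝ)) := by
      rw [← Real.rpow_natCast 2 (k*d)]; push_cast; ring_nf
    have e2 : (((2:ℝ)^j)^d)⁻¹ = (2:ℝ)^(-((j:ℝ)*(d:ℝ))) := by
      rw [← pow_mul, ← Real.rpow_natCast 2 (j*d), ← Real.rpow_neg (by norm_num)]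
      push_cast; ring_nf
    have e3 : (R₀^d * v) ^ (1/u) =
        (2:ℝ)^(-((k:ℝ)*(d:ℝ)) * (1/u)) * ((8:ℝ) ^ (-(d:ℝ)) * v) ^ (1/u) := by
      have hρd : ρ ^ d = (2:ℝ)^(-((k:ℝ)*(d:ℝ))) := by
        rw [hρ_def, inv_pow, ← pow_mul, ← Real.rpow_natCast 2 (k*d),
          ← Real.rpow_neg (by norm_num)]
        push_cast; ring_nf
      have h8d : (8:ℝ) ^ (-(d:ℝ)) = ((8:ℝ)^d)⁻¹ := by
        rw [← Real.rpow_natCast 8 d, ← Real.rpow_neg (by norm_num)]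
      have hR₀d : R₀ ^ d * v = (2:ℝ)^(-((k:ℝ)*(d:ℝ))) * ((8:ℝ) ^ (-(d:ℝ)) * v) := by
        rw [hR₀_def, div_pow, hρd, h8d]; ring
      rw [hR₀d, Real.mul_rpow (by positivity) (by positivity),
        ← Real.rpow_mul (by norm_num : (0:ℝ) ≤ 2)]
    rw [e1, e2, e3]
    have lhs_eq : c * ((8:ℝ) ^ (-(d:ℝ)) * v) ^ (1/u) * (2:ℝ)^((j:ℝ)*(s - (d:ℝ)/p)) *
        (2:ℝ)^((ℓ:ℝ)*((d:ℝ)*(1/p-1)-s)) =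
        (c * ((8:ℝ) ^ (-(d:ℝ)) * v) ^ (1/u)) *
          (2:ℝ)^((j:ℝ)*(s - (d:ℝ)/p) + (ℓ:ℝ)*((d:ℝ)*(1/p-1)-s)) := by
      rw [Real.rpow_add two_pos]; ring
    have rhs_eq : (2:ℝ)^((k:ℝ)*s) * (c * (2:ℝ)^(((k:ℝ))*(d:ℝ)) * (2:ℝ)^(-((j:ℝ)*(d:ℝ)))) *
        ((2:ℝ)^(-((k:ℝ)*(d:ℝ)) * (1/u)) * ((8:ℝ) ^ (-(d:ℝ)) * v) ^ (1/u)) =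
        (c * ((8:ℝ) ^ (-(d:ℝ)) * v) ^ (1/u)) *
          (2:ℝ)^((k:ℝ)*s + (k:ℝ)*(d:ℝ) + -((j:ℝ)*(d:ℝ)) + -((k:ℝ)*(d:ℝ)) * (1/u)) := by
      rw [Real.rpow_add two_pos, Real.rpow_add two_pos, Real.rpow_add two_pos]; ring
    rw [lhs_eq, rhs_eq]
    apply mul_le_mul_of_nonneg_left _ (by positivity)
    apply Real.rpow_le_rpow_of_exponent_le one_le_two
    have h1u : 1/u ≤ 1/p := one_div_le_one_div_of_le hp hpu
    have hkd : (0:ℝ) ≤ (k:ℝ)*(d:ℝ) := by positivity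
    have hmul := mul_le_mul_of_nonneg_left h1u hkd
    rw [hcast]
    have hE : (j:ℝ)*(s-(d:ℝ)/p) + ((j:ℝ)-(k:ℝ))*((d:ℝ)*(1/p-1)-s) =
        (k:ℝ)*s + (k:ℝ)*(d:ℝ) + -((j:ℝ)*(d:ℝ)) + -((k:ℝ)*(d:ℝ))*(1/p) := by ring
    rw [hE]
    linarith [hmul]
  -- lower bound on the sup over k
  have hf_lb : ∀ x ∈ ball y₀ R₀,
      ENNReal.ofReal ((2:ℝ)^((k:ℝ)*s) * (c * (2:ℝ)^(k*d) * (((2:ℝ)^j)^d)⁻¹)) ≤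
        ⨆ k' ∈ Finset.Icc 1 j, ENNReal.ofReal ((2:ℝ)^((k':ℝ)*s) *
          |∫ y, (2:ℝ)^(k'*d) * K ((2:ℝ)^k' • (x - y)) * ζ ((2:ℝ)^j • y)|) := by
    intro x hx
    refine le_iSup₂_of_le k (Finset.mem_Icc.mpr ⟨hk1, hkj⟩) ?_
    exact ENNReal.ofReal_le_ofReal
      (mul_le_mul_of_nonneg_left (hlower x hx) (by positivity))
  -- volume of the ball
  have hvolB : volume (ball y₀ R₀) = ENNReal.ofReal (R₀ ^ d * v) := by
    rw [MeasureTheory.Measure.addHaar_ball_of_pos volume y₀ hR₀, finrank_euclideanSpace_fin,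
      hv_def, ENNReal.ofReal_mul (by positivity), ENNReal.ofReal_toReal hVtop]
  have hB0 : volume (ball y₀ R₀) ≠ 0 := (measure_ball_pos volume y₀ hR₀).ne'
  have hBtop : volume (ball y₀ R₀) ≠ ⊤ := measure_ball_lt_top.ne
  -- put things together
  simp only [morreyNorm]
  refine le_trans ?_ (le_iSup_of_le y₀ (le_iSup_of_le R₀ (le_iSup_of_le hR₀ le_rfl)))
  set M' : ℝ≥0∞ := ENNReal.ofReal ((2:ℝ)^((k:ℝ)*s) * (c * (2:ℝ)^(k*d) * (((2:ℝ)^j)^d)⁻¹))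
    with hM'_def
  have hint : M' ^ p * volume (ball y₀ R₀) ≤
      ∫⁻ x in ball y₀ R₀, (⨆ k' ∈ Finset.Icc 1 j, ENNReal.ofReal ((2:ℝ)^((k':ℝ)*s) *
          |∫ y, (2:ℝ)^(k'*d) * K ((2:ℝ)^k' • (x - y)) * ζ ((2:ℝ)^j • y)|)) ^ p := by
    rw [← setLIntegral_const]
    exact setLIntegral_mono' measurableSet_ball
      (fun x hx => ENNReal.rpow_le_rpow (hf_lb x hx) hp.le)
  have heq : volume (ball y₀ R₀) ^ (1/u - 1/p) * (M' ^ p * volume (ball y₀ R₀)) ^ (1/p) =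
      M' * volume (ball y₀ R₀) ^ (1/u) := by
    rw [ENNReal.mul_rpow_of_nonneg _ _ (by positivity : (0:ℝ) ≤ 1/p),
      ← ENNReal.rpow_mul, mul_one_div_cancel hp.ne', ENNReal.rpow_one,
      mul_comm M' _, ← mul_assoc, ← ENNReal.rpow_add _ _ hB0 hBtop,
      show 1/u - 1/p + 1/p = 1/u by ring, mul_comm]
  calc ENNReal.ofReal (c * ((8:ℝ) ^ (-(d:ℝ)) * v) ^ (1/u) * (2:ℝ)^((j:ℝ)*(s - (d:ℝ)/p))) *
        ENNReal.ofReal ((2:ℝ)^((ℓ:ℝ)*((d:ℝ)*(1/p-1)-s)))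
      = ENNReal.ofReal (c * ((8:ℝ) ^ (-(d:ℝ)) * v) ^ (1/u) * (2:ℝ)^((j:ℝ)*(s - (d:ℝ)/p)) *
        (2:ℝ)^((ℓ:ℝ)*((d:ℝ)*(1/p-1)-s))) := by
        rw [← ENNReal.ofReal_mul (by positivity)]
    _ ≤ ENNReal.ofReal ((2:ℝ)^((k:ℝ)*s) * (c * (2:ℝ)^(k*d) * (((2:ℝ)^j)^d)⁻¹) *
        ((R₀^d * v)^(1/u))) := ENNReal.ofReal_le_ofReal hreal
    _ = M' * ENNReal.ofReal ((R₀^d * v)^(1/u)) := by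
        rw [hM'_def, ← ENNReal.ofReal_mul (by positivity)]
    _ = M' * volume (ball y₀ R₀) ^ (1/u) := by
        rw [hvolB, ENNReal.ofReal_rpow_of_pos (by positivity)]
    _ = volume (ball y₀ R₀) ^ (1/u - 1/p) * (M' ^ p * volume (ball y₀ R₀)) ^ (1/p) := heq.symm
    _ ≤ volume (ball y₀ R₀) ^ (1/u - 1/p) * (∫⁻ x in ball y₀ R₀,
          (⨆ k' ∈ Finset.Icc 1 j, ENNReal.ofReal ((2:ℝ)^((k':ℝ)*s) *
          |∫ y, (2:ℝ)^(k'*d) * K ((2:ℝ)^k' • (x - y)) * ζ ((2:ℝ)^j • y)|)) ^ p) ^ (1/p) := by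
        exact mul_le_mul_right (ENNReal.rpow_le_rpow hint (by positivity)) _
end
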